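/- For a one-dimensional Gaussian G ~ N(0, σ²) and any measurable set A ⊆ ℝ with P(x + G ∈ A) = p ∈ (0,1), and any shift δ ∈ ℝ with |δ| ≤ ε, one has P(x + δ + G ∈ A) ≥ Φ(Φ⁻¹(p) − ε/σ). -/

import Mathlib

open MeasureTheory ProbabilityTheory Real Set Filter

/-- Standard normal CDF. -/
noncomputable def Phi (x : ℝ) : ℝ := ((gaussianReal 0 1) (Set.Iic x)).toReal

/-- Standard normal quantile function (inverse CDF). -/
noncomputable def PhiInv : ℝ → ℝ := Function.invFun Phi

/-- Gaussian measure `N(0, σ² I)` on `Fin n → ℝ`. -/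
noncomputable def gaussPi (n : ℕ) (σ : ℝ) : Measure (Fin n → ℝ) :=
  Measure.pi (fun _ => gaussianReal 0 ⟨σ ^ 2, sq_nonneg σ⟩)

/-- Upper `p`-quantile of a (law) measure on ℝ: `inf {y | P(X ≤ y) ≥ p}`. -/
noncomputable def upperQ (ν : Measure ℝ) (p : ℝ) : ℝ :=
  sInf {y : ℝ | p ≤ (ν (Set.Iic y)).toReal}

/-- Lower `p`-quantile of a (law) measure on ℝ: `sup {y | P(X ≤ y) ≤ p}`. -/
noncomputable def lowerQ (ν : Measure ℝ) (p : ℝ) : ℝ :=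
  sSup {y : ℝ | (ν (Set.Iic y)).toReal ≤ p}

/-- Law of `g (x + G)` with `G ~ N(0, σ² I)`. -/
noncomputable def smoothedLaw {n : ℕ} (σ : ℝ) (g : (Fin n → ℝ) → ℝ) (x : Fin n → ℝ) :
    Measure ℝ :=
  (gaussPi n σ).map (fun u => g (x + u))

lemma phi_eq (y : ℝ) : Phi y = cdf (gaussianReal 0 1) y := (cdf_eq_real (μ := gaussianReal 0 1) y).symm

lemma phi_mono : Monotone Phi := by
  intro a b hab
  rw [phi_eq, phi_eq]
  exact monotone_cdf _ hab

lemma phi_continuous : Continuous Phi := by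
  have h1 : Phi = ⇑(cdf (gaussianReal 0 1)) := funext phi_eq
  rw [h1]
  set F := cdf (gaussianReal 0 1) with hF
  rw [continuous_iff_continuousAt]
  intro x
  rw [F.mono.continuousAt_iff_leftLim_eq_rightLim, F.rightLim_eq]
  have hsing : F.measure {x} = 0 := by
    rw [hF, measure_cdf]
    exact (gaussianReal_absolutelyContinuous 0 one_ne_zero) (volume_singleton)
  rw [F.measure_singleton, ENNReal.ofReal_eq_zero] at hsing
  have := F.mono.leftLim_le (le_refl x)
  linarith

lemma phi_surj {p : ℝ} (hp : p ∈ Set.Ioo (0:ℝ) 1) : ∃ c, Phi c = p := by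
  have h1 : Phi = ⇑(cdf (gaussianReal 0 1)) := funext phi_eq
  have hbot : Tendsto Phi atBot (nhds 0) := by rw [h1]; exact tendsto_cdf_atBot _
  have htop : Tendsto Phi atTop (nhds 1) := by rw [h1]; exact tendsto_cdf_atTop _
  obtain ⟨a, ha⟩ := (hbot.eventually_lt_const hp.1).exists
  obtain ⟨b, hb⟩ := (htop.eventually_const_lt hp.2).exists
  have hab : a ≤ b := by
    by_contra h
    exact absurd (phi_mono (le_of_not_ge h)) (by linarith)
  have := intermediate_value_Icc hab phi_continuous.continuousOn
  obtain ⟨c, _, hc⟩ := this ⟨ha.le, hb.le⟩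
  exact ⟨c, hc⟩

lemma phi_phiInv {p : ℝ} (hp : p ∈ Set.Ioo (0:ℝ) 1) : Phi (PhiInv p) = p :=
  Function.invFun_eq (phi_surj hp)

lemma gauss_Iic (σ : ℝ) (hσ : 0 < σ) (s : ℝ) :
    (gaussianReal 0 ⟨σ^2, sq_nonneg σ⟩) (Set.Iic s)
      = (gaussianReal 0 1) (Set.Iic (s/σ)) := by
  have hmap := gaussianReal_map_const_mul (μ := 0) (v := 1) σ
  have hv : (NNReal.mk (σ^2) (sq_nonneg σ)) * 1 = ⟨σ^2, sq_nonneg σ⟩ := mul_one _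
  rw [mul_zero, hv] at hmap
  rw [← hmap, Measure.map_apply (measurable_const_mul σ) measurableSet_Iic]
  congr 1
  ext u
  simp only [Set.mem_preimage, Set.mem_Iic]
  rw [le_div_iff₀ hσ, mul_comm]

lemma gauss_Iic_toReal (σ : ℝ) (hσ : 0 < σ) (s : ℝ) :
    ((gaussianReal 0 ⟨σ^2, sq_nonneg σ⟩) (Set.Iic s)).toReal = Phi (s/σ) := by
  rw [gauss_Iic σ hσ]; rfl

lemma ratio_ge (σ δ t u : ℝ) (hσ : 0 < σ) (h : t * δ ≤ u * δ) :
    Real.exp ((2*t*δ - δ^2)/(2*σ^2)) * gaussianPDFReal 0 ⟨σ^2, sq_nonneg σ⟩ u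
      ≤ gaussianPDFReal δ ⟨σ^2, sq_nonneg σ⟩ u := by
  show Real.exp ((2*t*δ - δ^2)/(2*σ^2)) * gaussianPDFReal 0 (NNReal.mk (σ^2) (sq_nonneg σ)) u
      ≤ gaussianPDFReal δ (NNReal.mk (σ^2) (sq_nonneg σ)) u
  unfold gaussianPDFReal
  simp only [NNReal.coe_mk, sub_zero]
  rw [mul_comm (Real.exp _) _, mul_assoc, ← Real.exp_add]
  have hC : (0:ℝ) ≤ (Real.sqrt (2 * π * σ^2))⁻¹ := by positivity
  refine mul_le_mul_of_nonneg_left (Real.exp_le_exp.2 ?_) hC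
  rw [← add_div, div_le_div_iff₀ (by positivity) (by positivity)]
  nlinarith [sq_nonneg σ]

lemma ratio_le (σ δ t u : ℝ) (hσ : 0 < σ) (h : u * δ ≤ t * δ) :
    gaussianPDFReal δ ⟨σ^2, sq_nonneg σ⟩ u
      ≤ Real.exp ((2*t*δ - δ^2)/(2*σ^2)) * gaussianPDFReal 0 ⟨σ^2, sq_nonneg σ⟩ u := by
  show gaussianPDFReal δ (NNReal.mk (σ^2) (sq_nonneg σ)) u
      ≤ Real.exp ((2*t*δ - δ^2)/(2*σ^2)) * gaussianPDFReal 0 (NNReal.mk (σ^2) (sq_nonneg σ)) u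
  unfold gaussianPDFReal
  simp only [NNReal.coe_mk, sub_zero]
  rw [mul_left_comm, ← Real.exp_add]
  have hC : (0:ℝ) ≤ (Real.sqrt (2 * π * σ^2))⁻¹ := by positivity
  refine mul_le_mul_of_nonneg_left (Real.exp_le_exp.2 ?_) hC
  rw [← add_div, div_le_div_iff₀ (by positivity) (by positivity)]
  nlinarith [sq_nonneg σ]

lemma core (σ δ p : ℝ) (hσ : 0 < σ) (hδ : 0 ≤ δ) (B : Set ℝ) (hB : MeasurableSet B)
    (hp : p ∈ Set.Ioo (0:ℝ) 1)
    (hPB : ((gaussianReal 0 ⟨σ^2, sq_nonneg σ⟩) B).toReal = p) :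
    Phi (PhiInv p - δ / σ) ≤
      ((gaussianReal 0 ⟨σ^2, sq_nonneg σ⟩) {u | δ + u ∈ B}).toReal := by
  have hv : (⟨σ^2, sq_nonneg σ⟩ : NNReal) ≠ 0 := by
    intro h
    have : ((⟨σ^2, sq_nonneg σ⟩ : NNReal) : ℝ) = 0 := by rw [h]; rfl
    simp only [NNReal.coe_mk] at this
    nlinarith
  haveI : IsProbabilityMeasure (gaussianReal 0 ⟨σ^2, sq_nonneg σ⟩) :=
    inferInstanceAs (IsProbabilityMeasure (gaussianReal 0 (NNReal.mk (σ^2) (sq_nonneg σ))))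
  haveI : IsProbabilityMeasure (gaussianReal δ ⟨σ^2, sq_nonneg σ⟩) :=
    inferInstanceAs (IsProbabilityMeasure (gaussianReal δ (NNReal.mk (σ^2) (sq_nonneg σ))))
  set c := PhiInv p with hcdef
  have hPhic : Phi c = p := phi_phiInv hp
  set t := σ * c with htdef
  set μ : Measure ℝ := gaussianReal 0 ⟨σ^2, sq_nonneg σ⟩ with hμdef
  set ν : Measure ℝ := gaussianReal δ ⟨σ^2, sq_nonneg σ⟩ with hνdef
  have htc : t / σ = c := by rw [htdef]; field_simp
  have hμt : (μ (Set.Iic t)).toReal = p := by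
    rw [hμdef, gauss_Iic_toReal σ hσ, htc, hPhic]
  have hBH : μ B = μ (Set.Iic t) := by
    rw [← ENNReal.toReal_eq_toReal_iff' (measure_ne_top μ B) (measure_ne_top μ _), hμt]
    exact hPB
  set r := Real.exp ((2*t*δ - δ^2)/(2*σ^2)) with hrdef
  set R := ENNReal.ofReal r with hRdef
  have hRtop : R ≠ ⊤ := ENNReal.ofReal_ne_top
  have key : ∀ u, (Set.Iic t).indicator (gaussianPDF δ ⟨σ^2, sq_nonneg σ⟩) u
      + B.indicator (fun w => R * gaussianPDF 0 ⟨σ^2, sq_nonneg σ⟩ w) u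
      ≤ B.indicator (gaussianPDF δ ⟨σ^2, sq_nonneg σ⟩) u
      + (Set.Iic t).indicator (fun w => R * gaussianPDF 0 ⟨σ^2, sq_nonneg σ⟩ w) u := by
    intro u
    by_cases huB : u ∈ B <;> by_cases huH : u ∈ Set.Iic t <;>
      simp only [Set.indicator_of_mem, Set.indicator_of_notMem, huB, huH, zero_add, add_zero,
        le_refl, not_false_iff]
    · -- u ∈ B, u ∉ Iic t : R * f0 ≤ fδ
      unfold gaussianPDF
      rw [hRdef, ← ENNReal.ofReal_mul (Real.exp_pos _).le]
      refine ENNReal.ofReal_le_ofReal ?_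
      exact ratio_ge σ δ t u hσ
        (mul_le_mul_of_nonneg_right (le_of_not_ge huH) hδ)
    · -- u ∉ B, u ∈ Iic t : fδ ≤ R * f0
      unfold gaussianPDF
      rw [hRdef, ← ENNReal.ofReal_mul (Real.exp_pos _).le]
      refine ENNReal.ofReal_le_ofReal ?_
      exact ratio_le σ δ t u hσ (mul_le_mul_of_nonneg_right huH hδ)
  have hmδ : Measurable (gaussianPDF δ ⟨σ^2, sq_nonneg σ⟩) := measurable_gaussianPDF _ _
  have hm0 : Measurable (fun w => R * gaussianPDF 0 ⟨σ^2, sq_nonneg σ⟩ w) :=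
    (measurable_gaussianPDF _ _).const_mul R
  have hineq := lintegral_mono key (μ := volume)
  rw [lintegral_add_left (hmδ.indicator measurableSet_Iic),
      lintegral_add_left (hmδ.indicator hB),
      lintegral_indicator measurableSet_Iic _, lintegral_indicator hB _,
      lintegral_indicator measurableSet_Iic _, lintegral_indicator hB _] at hineq
  rw [lintegral_const_mul R (measurable_gaussianPDF 0 (⟨σ^2, sq_nonneg σ⟩ : NNReal)),
      lintegral_const_mul R (measurable_gaussianPDF 0 (⟨σ^2, sq_nonneg σ⟩ : NNReal))] at hineq
  rw [← gaussianReal_apply δ hv, ← gaussianReal_apply δ hv,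
      ← gaussianReal_apply 0 hv, ← gaussianReal_apply 0 hv] at hineq
  rw [← hμdef, ← hνdef, ← hBH] at hineq
  have hνBH : ν (Set.Iic t) ≤ ν B :=
    (ENNReal.add_le_add_iff_right (ENNReal.mul_ne_top hRtop (measure_ne_top μ B))).mp hineq
  have hshift : Measure.map (fun u => δ + u) μ = ν := by
    rw [hμdef, hνdef, gaussianReal_map_const_add (v := ⟨σ^2, sq_nonneg σ⟩), zero_add]
  have hmap : μ {u | δ + u ∈ B} = ν B := by
    rw [← hshift, Measure.map_apply (measurable_const_add δ) hB]
    rfl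
  have hνt : (ν (Set.Iic t)).toReal = Phi (c - δ / σ) := by
    have h1 : ν (Set.Iic t) = μ (Set.Iic (t - δ)) := by
      rw [← hshift, Measure.map_apply (measurable_const_add δ) measurableSet_Iic]
      congr 1
      ext u
      simp [Set.mem_Iic, le_sub_iff_add_le']
    rw [h1, hμdef, gauss_Iic_toReal σ hσ, sub_div, htc]
  rw [hmap]
  rw [← hνt]
  exact ENNReal.toReal_mono (measure_ne_top ν B) hνBH

lemma gauss_neg (σ : ℝ) (S : Set ℝ) (hS : MeasurableSet S) :
    (gaussianReal 0 ⟨σ^2, sq_nonneg σ⟩) {u | -u ∈ S}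
      = (gaussianReal 0 ⟨σ^2, sq_nonneg σ⟩) S := by
  have hmap := gaussianReal_map_const_mul (μ := 0) (v := ⟨σ^2, sq_nonneg σ⟩) (-1)
  rw [show ((-1:ℝ)) * 0 = 0 by ring,
    show (NNReal.mk ((-1:ℝ)^2) (sq_nonneg _)) * ⟨σ^2, sq_nonneg σ⟩ = ⟨σ^2, sq_nonneg σ⟩ by
      apply NNReal.eq; show (-1:ℝ)^2 * σ^2 = σ^2; norm_num] at hmap
  calc (gaussianReal 0 ⟨σ^2, sq_nonneg σ⟩) {u | -u ∈ S}
      = (gaussianReal 0 ⟨σ^2, sq_nonneg σ⟩) ((fun u : ℝ => (-1) * u) ⁻¹' S) := by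
        congr 1; ext u; simp [neg_one_mul]
    _ = (Measure.map (fun u : ℝ => (-1) * u) (gaussianReal 0 ⟨σ^2, sq_nonneg σ⟩)) S :=
        (Measure.map_apply (measurable_const_mul _) hS).symm
    _ = (gaussianReal 0 ⟨σ^2, sq_nonneg σ⟩) S := by rw [hmap]

/-- one-dimensional Gaussian shift lower bound.  For a real Gaussian
`G ~ N(0, σ²)`, a Borel set `A` with `P(x + G ∈ A) = p ∈ (0,1)`, and a shift with
`|δ| ≤ ε`, one has `P(x + δ + G ∈ A) ≥ Φ(Φ⁻¹(p) − ε/σ)`. -/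
theorem stmt_17 (σ ε x δ p : ℝ) (hσ : 0 < σ) (hε : 0 ≤ ε) (hδ : |δ| ≤ ε)
    (A : Set ℝ) (hA : MeasurableSet A) (hp : p ∈ Set.Ioo (0:ℝ) 1)
    (hPA : ((gaussianReal 0 ⟨σ ^ 2, sq_nonneg σ⟩) {u | x + u ∈ A}).toReal = p) :
    Phi (PhiInv p - ε / σ) ≤
      ((gaussianReal 0 ⟨σ ^ 2, sq_nonneg σ⟩) {u | x + δ + u ∈ A}).toReal := by
  set B := {u : ℝ | x + u ∈ A} with hBdef
  have hBm : MeasurableSet B := (measurable_const_add x) hA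
  have hset : {u : ℝ | x + δ + u ∈ A} = {u | δ + u ∈ B} := by
    ext u; simp only [hBdef, Set.mem_setOf_eq, add_assoc]
  rw [hset]
  rcases le_or_gt 0 δ with hδ0 | hδ0
  · have h1 := core σ δ p hσ hδ0 B hBm hp hPA
    refine le_trans (phi_mono ?_) h1
    have hδε : δ ≤ ε := le_trans (le_abs_self δ) hδ
    have : δ / σ ≤ ε / σ := div_le_div_of_nonneg_right hδε hσ.le
    linarith
  · set B' := {u : ℝ | -u ∈ B} with hB'def
    have hB'm : MeasurableSet B' := measurable_neg hBm
    have hPB' : ((gaussianReal 0 ⟨σ ^ 2, sq_nonneg σ⟩) B').toReal = p := by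
      rw [hB'def, gauss_neg σ B hBm]; exact hPA
    have h1 := core σ (-δ) p hσ (by linarith) B' hB'm hp hPB'
    have hsets : {u : ℝ | -δ + u ∈ B'} = {u : ℝ | -u ∈ {w | δ + w ∈ B}} := by
      ext u
      simp only [hB'def, Set.mem_setOf_eq]
      rw [show -(-δ + u) = δ + -u by ring]
    have h2 : (gaussianReal 0 ⟨σ ^ 2, sq_nonneg σ⟩) {u | -δ + u ∈ B'}
        = (gaussianReal 0 ⟨σ ^ 2, sq_nonneg σ⟩) {u | δ + u ∈ B} := by
      rw [hsets]
      exact gauss_neg σ _ ((measurable_const_add δ) hBm)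
    rw [h2] at h1
    refine le_trans (phi_mono ?_) h1
    have hδε : -δ ≤ ε := le_trans (neg_le_abs δ) hδ
    have : -δ / σ ≤ ε / σ := div_le_div_of_nonneg_right hδε hσ.le
    linarith
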